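/- With notation as in the context: let S₁, S₂ ⊆ ι be disjoint finite subsets and let Y ∈ ι be an element with Y ∉ S₁ and Y ∉ S₂. Then ∂(e_{S₁} · e_{S₂}) lies in the two-sided ideal of Λ generated by the two elements ∂(e_{S₁ ∪ {Y}}) and ∂(e_{S₂ ∪ {Y}}). -/
import Mathlib


noncomputable section

/-- The degree-one generator `e_y` of the exterior algebra of the free module on `ι`. -/
def extGen (R : Type*) [CommRing R] {ι : Type*} (y : ι) :
    ExteriorAlgebra R (ι →₀ R) :=
  ExteriorAlgebra.ι R (Finsupp.single y 1)

/-- The linear functional `f` on the free module with `f(b_y) = 1` for every `y`. -/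
def allOneFunctional (R : Type*) [CommRing R] (ι : Type*) :
    Module.Dual R (ι →₀ R) :=
  Finsupp.linearCombination R (fun _ : ι => (1 : R))

/-- The left interior product (contraction) `∂` by the all-one functional on the exterior
algebra `Λ = ExteriorAlgebra R (ι →₀ R)`. -/
def extContraction (R : Type*) [CommRing R] (ι : Type*) :
    ExteriorAlgebra R (ι →₀ R) →ₗ[R] ExteriorAlgebra R (ι →₀ R) :=
  CliffordAlgebra.contractLeft (allOneFunctional R ι)

/-- For a finite subset `S ⊆ ι` (with `ι` linearly ordered), `e_S` is the product of the
generators `e_y`, `y ∈ S`, taken in increasing order (with `e_∅ = 1`). -/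
def extProd (R : Type*) [CommRing R] {ι : Type*} [LinearOrder ι] (S : Finset ι) :
    ExteriorAlgebra R (ι →₀ R) :=
  ((S.sort (· ≤ ·)).map (extGen R)).prod

section AuxLemmas

variable {R : Type*} [CommRing R] {ι : Type*}

lemma allOne_single (y : ι) : allOneFunctional R ι (Finsupp.single y 1) = 1 := by
  simp [allOneFunctional]

lemma contr_gen_mul (y : ι) (x : ExteriorAlgebra R (ι →₀ R)) :
    extContraction R ι (extGen R y * x) = x - extGen R y * extContraction R ι x := by
  simp [extContraction, extGen, CliffordAlgebra.contractLeft_ι_mul, allOne_single]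

lemma gen_swap (a b : ι) :
    extGen R a * extGen R b = -(extGen R b * extGen R a) := by
  rw [eq_neg_iff_add_eq_zero]
  exact ExteriorAlgebra.ι_add_mul_swap _ _

lemma contractLeft_mul_zeroQ {M : Type*} [AddCommGroup M] [Module R M]
    (d : Module.Dual R M) (x y : CliffordAlgebra (0 : QuadraticForm R M)) :
    CliffordAlgebra.contractLeft d (x * y) =
      CliffordAlgebra.contractLeft d x * y
        + CliffordAlgebra.involute x * CliffordAlgebra.contractLeft d y := by
  induction x using CliffordAlgebra.induction generalizing y with
  | algebraMap r =>
      rw [Algebra.commutes, CliffordAlgebra.contractLeft_mul_algebraMap,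
        CliffordAlgebra.contractLeft_algebraMap, zero_mul, zero_add,
        CliffordAlgebra.involute.commutes, Algebra.commutes]
  | ι m =>
      rw [CliffordAlgebra.contractLeft_ι_mul, CliffordAlgebra.contractLeft_ι,
        CliffordAlgebra.involute_ι, Algebra.smul_def, sub_eq_add_neg, neg_mul]
  | mul x₁ x₂ h1 h2 =>
      rw [mul_assoc, h1 (x₂ * y), h2 y, h1 x₂, map_mul]
      noncomm_ring
  | add x₁ x₂ h1 h2 =>
      rw [add_mul, map_add, h1, h2, map_add, add_mul, map_add, add_mul]
      abel

lemma contr_mul (x y : ExteriorAlgebra R (ι →₀ R)) :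
    extContraction R ι (x * y) =
      extContraction R ι x * y + CliffordAlgebra.involute x * extContraction R ι y :=
  contractLeft_mul_zeroQ _ x y

lemma contr_involute {M : Type*} [AddCommGroup M] [Module R M]
    (d : Module.Dual R M) (x : CliffordAlgebra (0 : QuadraticForm R M)) :
    CliffordAlgebra.contractLeft d (CliffordAlgebra.involute x) =
      - CliffordAlgebra.involute (CliffordAlgebra.contractLeft d x) := by
  induction x using CliffordAlgebra.induction with
  | algebraMap r =>
      simp [CliffordAlgebra.contractLeft_algebraMap]
  | ι m =>
      simp [CliffordAlgebra.involute_ι, CliffordAlgebra.contractLeft_ι]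
  | mul x₁ x₂ h1 h2 =>
      rw [map_mul, contractLeft_mul_zeroQ, h1, h2, contractLeft_mul_zeroQ, map_add, map_mul,
        map_mul, CliffordAlgebra.involute_involute]
      noncomm_ring
  | add x₁ x₂ h1 h2 =>
      rw [map_add, map_add, h1, h2, map_add, map_add, neg_add]

lemma gen_mul_comm (y : ι) (x : ExteriorAlgebra R (ι →₀ R)) :
    extGen R y * x = CliffordAlgebra.involute x * extGen R y := by
  induction x using CliffordAlgebra.induction with
  | algebraMap r => rw [CliffordAlgebra.involute.commutes, Algebra.commutes]
  | ι m =>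
      rw [CliffordAlgebra.involute_ι, neg_mul, eq_neg_iff_add_eq_zero]
      exact ExteriorAlgebra.ι_add_mul_swap _ _
  | mul x₁ x₂ h1 h2 =>
      rw [map_mul, ← mul_assoc, h1, mul_assoc, h2, mul_assoc]
  | add x₁ x₂ h1 h2 => rw [mul_add, h1, h2, map_add, add_mul]

lemma involute_extGen (y : ι) :
    CliffordAlgebra.involute (extGen R y) = -extGen R y :=
  CliffordAlgebra.involute_ι _

lemma involute_listprod (l : List ι) :
    CliffordAlgebra.involute ((l.map (extGen R)).prod)
      = ((-1 : R) ^ l.length) • (l.map (extGen R)).prod := by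
  induction l with
  | nil => simp
  | cons a t ih =>
      rw [List.map_cons, List.prod_cons, map_mul, ih, involute_extGen, List.length_cons,
        pow_succ, mul_smul, neg_one_smul, Algebra.mul_smul_comm, neg_mul, smul_neg]

lemma perm_listprod {l l' : List ι} (h : l.Perm l') :
    ∃ ε : R, ε * ε = 1 ∧
      ((l.map (extGen R)).prod : ExteriorAlgebra R (ι →₀ R))
        = ε • (l'.map (extGen R)).prod := by
  induction h with
  | nil => exact ⟨1, by simp, by simp⟩
  | cons a h ih =>
      obtain ⟨ε, hε, he⟩ := ih
      exact ⟨ε, hε, by rw [List.map_cons, List.prod_cons, he, List.map_cons, List.prod_cons,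
        Algebra.mul_smul_comm]⟩
  | swap a b t =>
      refine ⟨-1, by ring, ?_⟩
      simp only [List.map_cons, List.prod_cons, neg_smul, one_smul]
      rw [← mul_assoc, ← mul_assoc, gen_swap, neg_mul]
  | trans h1 h2 ih1 ih2 =>
      obtain ⟨ε₁, hε₁, he₁⟩ := ih1
      obtain ⟨ε₂, hε₂, he₂⟩ := ih2
      exact ⟨ε₁ * ε₂, by rw [mul_mul_mul_comm, hε₁, hε₂, one_mul],
        by rw [he₁, he₂, smul_smul]⟩

lemma mul_gen_comm (y : ι) (x : ExteriorAlgebra R (ι →₀ R)) :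
    x * extGen R y = extGen R y * CliffordAlgebra.involute x := by
  have h := gen_mul_comm (R := R) y (CliffordAlgebra.involute x)
  rw [CliffordAlgebra.involute_involute] at h
  exact h.symm

lemma contrX_involute (x : ExteriorAlgebra R (ι →₀ R)) :
    extContraction R ι (CliffordAlgebra.involute x)
      = - CliffordAlgebra.involute (extContraction R ι x) :=
  contr_involute _ x

lemma main_step (n : ℕ) (A B : ExteriorAlgebra R (ι →₀ R)) (Y : ι)
    (hinvA : CliffordAlgebra.involute A = ((-1 : R) ^ n) • A) :
    extContraction R ι (A * B)
      = extContraction R ι A * (B - extGen R Y * extContraction R ι B)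
        + ((-1 : R) ^ n) •
            ((A - extGen R Y * extContraction R ι A) * extContraction R ι B) := by
  set D := extContraction R ι with hD
  set e := extGen R Y with he
  set s : R := (-1 : R) ^ n with hs
  have h3 := contrX_involute (R := R) A
  rw [hinvA, map_smul, ← hD] at h3
  have h4 : CliffordAlgebra.involute (D A) = -(s • D A) := by rw [h3, neg_neg]
  have hcomm : D A * e = -(s • (e * D A)) := by
    rw [he, mul_gen_comm, h4, mul_neg, Algebra.mul_smul_comm]
  have hkey : D A * (e * D B) = -(s • (e * D A * D B)) := by
    rw [← mul_assoc, hcomm, neg_mul, smul_mul_assoc]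
  rw [hD, contr_mul, ← hD, hinvA, smul_mul_assoc, mul_sub, sub_mul, smul_sub, hkey,
    sub_neg_eq_add]
  abel

end AuxLemmas

/-- If `S₁, S₂ ⊆ ι` are disjoint finite subsets and `Y ∈ ι` lies in neither,
then `∂(e_{S₁} · e_{S₂})` lies in the two-sided ideal of `Λ` generated by
`∂(e_{S₁ ∪ {Y}})` and `∂(e_{S₂ ∪ {Y}})`. -/
theorem contraction_prod_mem_span
    (R : Type*) [CommRing R] (ι : Type*) [LinearOrder ι]
    (S₁ S₂ : Finset ι) (hdisj : Disjoint S₁ S₂)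
    (Y : ι) (hY₁ : Y ∉ S₁) (hY₂ : Y ∉ S₂) :
    extContraction R ι (extProd R S₁ * extProd R S₂) ∈
      TwoSidedIdeal.span {extContraction R ι (extProd R (insert Y S₁)),
        extContraction R ι (extProd R (insert Y S₂))} := by
  classical
  have hperm : ∀ (S : Finset ι), Y ∉ S →
      ((insert Y S).sort (· ≤ ·)).Perm (Y :: S.sort (· ≤ ·)) := by
    intro S hY
    rw [← Multiset.coe_eq_coe, Finset.sort_eq, ← Multiset.cons_coe, Finset.sort_eq,
      Finset.insert_val_of_notMem hY]
  obtain ⟨ε₁, hε₁, h1⟩ := perm_listprod (R := R) (hperm S₁ hY₁)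
  obtain ⟨ε₂, hε₂, h2⟩ := perm_listprod (R := R) (hperm S₂ hY₂)
  simp only [List.map_cons, List.prod_cons] at h1 h2
  have hio1 : extProd R (insert Y S₁) = ε₁ • (extGen R Y * extProd R S₁) := h1
  have hio2 : extProd R (insert Y S₂) = ε₂ • (extGen R Y * extProd R S₂) := h2
  have hu : extProd R S₁ - extGen R Y * extContraction R ι (extProd R S₁)
      = ε₁ • extContraction R ι (extProd R (insert Y S₁)) := by
    rw [hio1, map_smul, contr_gen_mul, smul_smul, hε₁, one_smul]
  have hv : extProd R S₂ - extGen R Y * extContraction R ι (extProd R S₂)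
      = ε₂ • extContraction R ι (extProd R (insert Y S₂)) := by
    rw [hio2, map_smul, contr_gen_mul, smul_smul, hε₂, one_smul]
  have hinv : CliffordAlgebra.involute (extProd R S₁)
      = ((-1 : R) ^ (S₁.sort (· ≤ ·)).length) • extProd R S₁ := involute_listprod _
  have hmain := main_step (R := R) ((S₁.sort (· ≤ ·)).length) (extProd R S₁) (extProd R S₂)
    Y hinv
  rw [hu, hv] at hmain
  rw [hmain, TwoSidedIdeal.mem_span_iff]
  intro I hI
  have hg₁ : extContraction R ι (extProd R (insert Y S₁)) ∈ I := hI (Set.mem_insert _ _)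
  have hg₂ : extContraction R ι (extProd R (insert Y S₂)) ∈ I := hI (Set.mem_insert_of_mem _ rfl)
  have hsmul : ∀ (r : R) (x : ExteriorAlgebra R (ι →₀ R)), x ∈ I → r • x ∈ I := by
    intro r x hx
    rw [Algebra.smul_def]
    exact I.mul_mem_left _ _ hx
  refine I.add_mem ?_ (hsmul _ _ ?_)
  · rw [Algebra.mul_smul_comm]
    exact hsmul _ _ (I.mul_mem_left _ _ hg₂)
  · rw [smul_mul_assoc]
    exact hsmul _ _ (I.mul_mem_right _ _ hg₁)
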